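/- Let A : ℝ → Matrix (Fin n) (Fin n) ℝ, B : ℝ → Matrix (Fin m) (Fin m) ℝ, P : ℝ → Matrix (Fin m) (Fin n) ℝ, Q : ℝ → Matrix (Fin n) (Fin m) ℝ be continuous on [0, b]. Suppose Y : ℝ → Matrix (Fin n) (Fin m) ℝ is a differentiable solution of the Riccati equation d/dx Y(x) + Y(x)·P(x)·Y(x) + Y(x)·B(x) − A(x)·Y(x) − Q(x) = 0 with Y(0) = 0, and let W₀ be an n × m real matrix. Define R(x) := ℱ(−(B + P·Y))(x) · P(x) · ℰ(A − Y·P)(x). Then on any subinterval [0, c] ⊆ [0, b] on which the m × m matrix 1 + (∫_0^x R(t) dt) · W₀ is invertible for all x, the function W(x) := Y(x) + ℰ(A − Y·P)(x) · W₀ · (1 + (∫_0^x R(t) dt) · W₀)⁻¹ · ℱ(−(B + P·Y))(x) is differentiable, satisfies W(0) = W₀, and solves the Riccati equation d/dx W(x) + W(x)·P(x)·W(x) + W(x)·B(x) − A(x)·W(x) − Q(x) = 0. -/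

import Mathlib

open MeasureTheory Matrix

/- Matrices are equipped with the elementwise sup norm. -/
attribute [local instance] Matrix.normedAddCommGroup Matrix.normedSpace

/-- Terms of the left integral series: `E_0(x) = 1`, `E_{k+1}(x) = ∫_0^x X(t) * E_k(t) dt`. -/
noncomputable def lterm {ι : Type*} [Fintype ι] [DecidableEq ι]
    (X : ℝ → Matrix ι ι ℝ) : ℕ → ℝ → Matrix ι ι ℝ
  | 0, _ => 1
  | k + 1, x => ∫ t in (0:ℝ)..x, X t * lterm X k t

/-- The left integral series `ℰ(X)(x) = ∑_{k=0}^∞ E_k(x)`. -/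
noncomputable def ES {ι : Type*} [Fintype ι] [DecidableEq ι]
    (X : ℝ → Matrix ι ι ℝ) (x : ℝ) : Matrix ι ι ℝ := ∑' k, lterm X k x

/-- Terms of the right integral series: `F_0(x) = 1`, `F_{k+1}(x) = ∫_0^x F_k(t) * X(t) dt`. -/
noncomputable def rterm {ι : Type*} [Fintype ι] [DecidableEq ι]
    (X : ℝ → Matrix ι ι ℝ) : ℕ → ℝ → Matrix ι ι ℝ
  | 0, _ => 1
  | k + 1, x => ∫ t in (0:ℝ)..x, rterm X k t * X t

/-- The right integral series `ℱ(X)(x) = ∑_{k=0}^∞ F_k(x)`. -/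
noncomputable def FS {ι : Type*} [Fintype ι] [DecidableEq ι]
    (X : ℝ → Matrix ι ι ℝ) (x : ℝ) : Matrix ι ι ℝ := ∑' k, rterm X k x

set_option linter.unusedSectionVars false
set_option maxHeartbeats 1600000

section Helpers

open Set intervalIntegral Filter

variable {ι κ σ : Type*} [Fintype ι] [Fintype κ] [Fintype σ] [DecidableEq ι]

noncomputable instance matrixContinuousENorm {m' n' : Type*} [Fintype m'] [Fintype n'] :
    ContinuousENorm (Matrix m' n' ℝ) :=
  SeminormedAddGroup.toContinuousENorm

lemma norm_matmul_le (A : Matrix ι κ ℝ) (B : Matrix κ σ ℝ) :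
    ‖A * B‖ ≤ (Fintype.card κ) * ‖A‖ * ‖B‖ := by
  rw [Matrix.norm_le_iff (by positivity)]
  intro i j
  calc ‖(A * B) i j‖ = ‖∑ k, A i k * B k j‖ := by rw [Matrix.mul_apply]
    _ ≤ ∑ k, ‖A i k * B k j‖ := norm_sum_le _ _
    _ ≤ ∑ _k : κ, ‖A‖ * ‖B‖ := by
        refine Finset.sum_le_sum fun k _ => ?_
        rw [norm_mul]
        exact mul_le_mul (Matrix.norm_entry_le_entrywise_sup_norm A)
          (Matrix.norm_entry_le_entrywise_sup_norm B) (norm_nonneg _) (norm_nonneg _)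
    _ = Fintype.card κ * ‖A‖ * ‖B‖ := by
        rw [Finset.sum_const, Finset.card_univ, nsmul_eq_mul, mul_assoc]


lemma isBoundedBilinearMap_matmul :
    IsBoundedBilinearMap ℝ (fun p : Matrix ι κ ℝ × Matrix κ σ ℝ => p.1 * p.2) where
  add_left := fun A A' B => Matrix.add_mul A A' B
  smul_left := fun c A B => Matrix.smul_mul c A B
  add_right := fun A B B' => Matrix.mul_add A B B'
  smul_right := fun c A B => Matrix.mul_smul A c B
  bound := ⟨Fintype.card κ + 1, by positivity, fun A B => by
    have := norm_matmul_le A B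
    nlinarith [norm_nonneg A, norm_nonneg B]⟩

lemma HasDerivWithinAt.matmul {f : ℝ → Matrix ι κ ℝ} {g : ℝ → Matrix κ σ ℝ}
    {f' : Matrix ι κ ℝ} {g' : Matrix κ σ ℝ} {s : Set ℝ} {x : ℝ}
    (hf : HasDerivWithinAt f f' s x) (hg : HasDerivWithinAt g g' s x) :
    HasDerivWithinAt (fun t => f t * g t) (f' * g x + f x * g') s x := by
  have hp : HasDerivWithinAt (fun t => (f t, g t)) (f', g') s x := hf.prodMk hg
  have hbb : IsBoundedBilinearMap ℝ (fun p : Matrix ι κ ℝ × Matrix κ σ ℝ => p.1 * p.2) :=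
    isBoundedBilinearMap_matmul
  have hfd := (hbb.hasFDerivAt (f x, g x)).comp_hasDerivWithinAt x hp
  have heq : (fun p : Matrix ι κ ℝ × Matrix κ σ ℝ => p.1 * p.2) ∘ (fun t => (f t, g t)) =
      fun t => f t * g t := rfl
  rw [heq] at hfd
  rw [hbb.deriv_apply] at hfd
  rw [add_comm] at hfd
  exact hfd

lemma hasDerivWithinAt_matrix_inv {N : ℝ → Matrix ι ι ℝ} {N' : Matrix ι ι ℝ}
    {s : Set ℝ} {x : ℝ} (h : HasDerivWithinAt N N' s x) (hx : x ∈ s)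
    (hinv : ∀ y ∈ s, IsUnit (N y)) :
    HasDerivWithinAt (fun y => (N y)⁻¹) (-((N x)⁻¹ * N' * (N x)⁻¹)) s x := by
  have hdet : ∀ y ∈ s, (N y).det ≠ 0 := fun y hy =>
    ((Matrix.isUnit_iff_isUnit_det _).mp (hinv y hy)).ne_zero
  have hNN : ∀ y ∈ s, (N y)⁻¹ * N y = 1 := fun y hy =>
    Matrix.nonsing_inv_mul _ ((Matrix.isUnit_iff_isUnit_det _).mp (hinv y hy))
  have hNN' : ∀ y ∈ s, N y * (N y)⁻¹ = 1 := fun y hy =>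
    Matrix.mul_nonsing_inv _ ((Matrix.isUnit_iff_isUnit_det _).mp (hinv y hy))
  have hcont : Filter.Tendsto N (nhdsWithin x s) (nhds (N x)) := h.continuousWithinAt
  have hinvcont : Filter.Tendsto (fun y => (N y)⁻¹) (nhdsWithin x s) (nhds ((N x)⁻¹)) := by
    have hdet' : Filter.Tendsto (fun y => (N y).det) (nhdsWithin x s) (nhds (N x).det) :=
      ((continuous_id.matrix_det).tendsto _).comp hcont
    have hadj : Filter.Tendsto (fun y => (N y).adjugate) (nhdsWithin x s)
        (nhds (N x).adjugate) := ((continuous_id.matrix_adjugate).tendsto _).comp hcont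
    have := (hdet'.inv₀ (hdet x hx)).smul hadj
    simp only [Matrix.inv_def, Ring.inverse_eq_inv'] at *
    exact this
  replace h := hasDerivWithinAt_iff_tendsto_slope.mp h
  refine hasDerivWithinAt_iff_tendsto_slope.mpr ?_
  have hmem : s \ {x} ∈ nhdsWithin x (s \ {x}) := self_mem_nhdsWithin
  have hsub : nhdsWithin x (s \ {x}) ≤ nhdsWithin x s := nhdsWithin_mono x diff_subset
  have heq : ∀ y ∈ s \ {x},
      slope (fun y => (N y)⁻¹) x y = (N y)⁻¹ * (-(slope N x y)) * (N x)⁻¹ := by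
    intro y hy
    have hy' : y ∈ s := hy.1
    have h1 : (N y)⁻¹ - (N x)⁻¹ = (N y)⁻¹ * (N x - N y) * (N x)⁻¹ := by
      rw [Matrix.mul_sub, Matrix.sub_mul, mul_assoc, hNN' x hx, mul_one, hNN y hy', one_mul]
    simp only [slope_def_module]
    rw [h1, ← smul_neg, neg_sub, Matrix.mul_smul, Matrix.smul_mul]
  have h2 : Filter.Tendsto (fun y => (N y)⁻¹ * (-(slope N x y)) * (N x)⁻¹)
      (nhdsWithin x (s \ {x})) (nhds (-((N x)⁻¹ * N' * (N x)⁻¹))) := by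
    have h1 := ((hinvcont.mono_left hsub).mul h.neg).mul
      (tendsto_const_nhds (x := (N x)⁻¹) (f := nhdsWithin x (s \ {x})))
    convert h1 using 2
    noncomm_ring
  exact Filter.Tendsto.congr' (Filter.eventually_of_mem hmem fun y hy => (heq y hy).symm) h2

lemma ContinuousOn.matmul {α : Type*} [TopologicalSpace α] {f : α → Matrix ι κ ℝ}
    {g : α → Matrix κ σ ℝ} {s : Set α} (hf : ContinuousOn f s) (hg : ContinuousOn g s) :
    ContinuousOn (fun t => f t * g t) s :=
  (continuous_fst.matrix_mul continuous_snd).comp_continuousOn (hf.prodMk hg)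

lemma intervalIntegrable_of_contOn {E : Type*} [NormedAddCommGroup E]
    {f : ℝ → E} {b x : ℝ} (hf : ContinuousOn f (Icc 0 b)) (hx : x ∈ Icc 0 b) :
    IntervalIntegrable f volume 0 x := by
  apply ContinuousOn.intervalIntegrable
  rw [uIcc_of_le hx.1]
  exact hf.mono (Icc_subset_Icc le_rfl hx.2)


lemma primitive_hasDerivWithinAt {E : Type*} [NormedAddCommGroup E] [NormedSpace ℝ E]
    [CompleteSpace E] {f : ℝ → E} {b x : ℝ}
    (hf : ContinuousOn f (Icc 0 b)) (hx : x ∈ Icc 0 b) :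
    HasDerivWithinAt (fun y => ∫ t in (0:ℝ)..y, f t) (f x) (Icc 0 b) x := by
  haveI : Fact (x ∈ Icc (0:ℝ) b) := ⟨hx⟩
  exact intervalIntegral.integral_hasDerivWithinAt_right
    (intervalIntegrable_of_contOn hf hx)
    ⟨Icc 0 b, self_mem_nhdsWithin, hf.aestronglyMeasurable measurableSet_Icc⟩
    (hf x hx)

section ESFacts

variable {X : ℝ → Matrix ι ι ℝ} {b M : ℝ}

lemma lterm_continuousOn (hb : 0 ≤ b) (hX : ContinuousOn X (Icc 0 b)) (k : ℕ) :
    ContinuousOn (lterm X k) (Icc 0 b) := by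
  induction k with
  | zero => exact continuousOn_const
  | succ k ih =>
    have hgc : ContinuousOn (fun t => X t * lterm X k t) (Icc 0 b) := hX.matmul ih
    have hint : IntegrableOn (fun t => X t * lterm X k t) (uIcc 0 b) := by
      rw [uIcc_of_le hb]; exact hgc.integrableOn_Icc
    have := continuousOn_primitive_interval hint
    rw [uIcc_of_le hb] at this
    exact this.congr fun x hx => by simp [lterm]

lemma matrix_norm_one_le : ‖(1 : Matrix ι ι ℝ)‖ ≤ 1 := by
  rw [Matrix.norm_le_iff zero_le_one]
  intro i j
  rw [Matrix.one_apply]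
  split <;> simp

lemma lterm_norm_le (hb : 0 ≤ b) (hX : ContinuousOn X (Icc 0 b)) (hM0 : 0 ≤ M)
    (hM : ∀ t ∈ Icc 0 b, ‖X t‖ ≤ M) (k : ℕ) :
    ∀ x ∈ Icc 0 b, ‖lterm X k x‖ ≤ (Fintype.card ι * M * x) ^ k / k.factorial := by
  induction k with
  | zero => intro x hx; simpa [lterm] using matrix_norm_one_le
  | succ k ih =>
    intro x hx
    set K : ℝ := (Fintype.card ι : ℝ) * M with hK
    have hK0 : 0 ≤ K := by positivity
    have hsub : Icc 0 x ⊆ Icc 0 b := Icc_subset_Icc le_rfl hx.2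
    have hgc : ContinuousOn (fun t => X t * lterm X k t) (Icc 0 b) :=
      hX.matmul (lterm_continuousOn hb hX k)
    have h1 : lterm X (k+1) x = ∫ t in (0:ℝ)..x, X t * lterm X k t := by simp [lterm]
    rw [h1]
    calc ‖∫ t in (0:ℝ)..x, X t * lterm X k t‖
        ≤ ∫ t in (0:ℝ)..x, ‖X t * lterm X k t‖ :=
          intervalIntegral.norm_integral_le_integral_norm hx.1
      _ ≤ ∫ t in (0:ℝ)..x, K ^ (k+1) * t ^ k / k.factorial := by
          apply intervalIntegral.integral_mono_on hx.1
          · exact intervalIntegrable_of_contOn hgc.norm hx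
          · apply Continuous.intervalIntegrable; continuity
          · intro t ht
            have ht' := hsub ht
            calc ‖X t * lterm X k t‖
                ≤ Fintype.card ι * ‖X t‖ * ‖lterm X k t‖ := norm_matmul_le _ _
              _ ≤ Fintype.card ι * M * ((K * t) ^ k / k.factorial) := by
                  apply mul_le_mul
                  · exact mul_le_mul_of_nonneg_left (hM t ht') (by positivity)
                  · exact ih t ht'
                  · exact norm_nonneg _
                  · positivity
              _ = K ^ (k+1) * t ^ k / k.factorial := by rw [mul_pow]; ring
      _ = (K * x) ^ (k+1) / (k+1).factorial := by
          have h2 : (fun t : ℝ => K ^ (k+1) * t ^ k / (k.factorial : ℝ)) =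
              fun t : ℝ => (K ^ (k+1) / k.factorial) * t ^ k := by funext t; ring
          rw [h2, intervalIntegral.integral_const_mul, integral_pow]
          have h3 : ((k+1).factorial : ℝ) = (k+1) * k.factorial := by
            rw [Nat.factorial_succ]; push_cast; ring
          rw [h3, mul_pow]
          have hkf : (k.factorial : ℝ) ≠ 0 := by positivity
          have hk1 : ((k:ℝ)+1) ≠ 0 := by positivity
          field_simp
          ring

lemma lterm_norm_le' (hb : 0 ≤ b) (hX : ContinuousOn X (Icc 0 b)) (hM0 : 0 ≤ M)
    (hM : ∀ t ∈ Icc 0 b, ‖X t‖ ≤ M) (k : ℕ) :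
    ∀ x ∈ Icc 0 b, ‖lterm X k x‖ ≤ (Fintype.card ι * M * b) ^ k / k.factorial := by
  intro x hx
  refine le_trans (lterm_norm_le hb hX hM0 hM k x hx) ?_
  gcongr
  · exact mul_nonneg (by positivity) hx.1
  · exact hx.2

lemma summable_lterm (hb : 0 ≤ b) (hX : ContinuousOn X (Icc 0 b)) (hM0 : 0 ≤ M)
    (hM : ∀ t ∈ Icc 0 b, ‖X t‖ ≤ M) {x : ℝ} (hx : x ∈ Icc 0 b) :
    Summable (fun k => lterm X k x) :=
  Summable.of_norm_bounded (Real.summable_pow_div_factorial (Fintype.card ι * M * b))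
    (fun k => lterm_norm_le' hb hX hM0 hM k x hx)

lemma ES_continuousOn (hb : 0 ≤ b) (hX : ContinuousOn X (Icc 0 b)) (hM0 : 0 ≤ M)
    (hM : ∀ t ∈ Icc 0 b, ‖X t‖ ≤ M) : ContinuousOn (ES X) (Icc 0 b) :=
  continuousOn_tsum (lterm_continuousOn hb hX)
    (Real.summable_pow_div_factorial (Fintype.card ι * M * b))
    (fun k x hx => lterm_norm_le' hb hX hM0 hM k x hx)

lemma ES_integral_eq (hb : 0 ≤ b) (hX : ContinuousOn X (Icc 0 b)) (hM0 : 0 ≤ M)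
    (hM : ∀ t ∈ Icc 0 b, ‖X t‖ ≤ M) {x : ℝ} (hx : x ∈ Icc 0 b) :
    ES X x = 1 + ∫ t in (0:ℝ)..x, X t * ES X t := by
  set K : ℝ := (Fintype.card ι : ℝ) * M with hK
  have hK0 : 0 ≤ K := by positivity
  have hsum : ∀ t ∈ Icc 0 b, Summable fun k => lterm X k t :=
    fun t ht => summable_lterm hb hX hM0 hM ht
  have hgc : ∀ k, ContinuousOn (fun t => X t * lterm X k t) (Icc 0 b) :=
    fun k => hX.matmul (lterm_continuousOn hb hX k)
  have hgbd : ∀ k, ∀ t ∈ Icc 0 b, ‖X t * lterm X k t‖ ≤ K * ((K * b) ^ k / k.factorial) := by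
    intro k t ht
    calc ‖X t * lterm X k t‖ ≤ Fintype.card ι * ‖X t‖ * ‖lterm X k t‖ := norm_matmul_le _ _
      _ ≤ K * ((K * b) ^ k / k.factorial) := by
          apply mul_le_mul
          · exact mul_le_mul_of_nonneg_left (hM t ht) (by positivity)
          · exact lterm_norm_le' hb hX hM0 hM k t ht
          · exact norm_nonneg _
          · exact hK0
  have hmulsum : ∀ t ∈ Icc 0 b, HasSum (fun k => X t * lterm X k t) (X t * ES X t) := by
    intro t ht
    have h := (hsum t ht).hasSum.map (AddMonoidHom.mulLeft (X t))
      (continuous_const.mul continuous_id)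
    simpa [Function.comp_def, ES, FS] using h
  have hIccx : Icc 0 x ⊆ Icc 0 b := Icc_subset_Icc le_rfl hx.2
  have hIocx : Ioc 0 x ⊆ Icc 0 b := fun t ht => hIccx (Ioc_subset_Icc_self ht)
  -- swap integral and tsum
  have hint : ∀ k, IntegrableOn (fun t => X t * lterm X k t) (Ioc 0 x) volume :=
    fun k => (((hgc k).mono hIccx).integrableOn_Icc).mono_set Ioc_subset_Icc_self
  have hbdint : ∀ k, ∫ t in Ioc 0 x, ‖X t * lterm X k t‖ ≤ x * (K * ((K * b) ^ k / k.factorial)) := by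
    intro k
    calc ∫ t in Ioc 0 x, ‖X t * lterm X k t‖
        ≤ ∫ _t in Ioc 0 x, K * ((K * b) ^ k / k.factorial) := by
          apply setIntegral_mono_on (hint k).norm
          · exact integrableOn_const measure_Ioc_lt_top.ne
          · exact measurableSet_Ioc
          · exact fun t ht => hgbd k t (hIocx ht)
      _ = x * (K * ((K * b) ^ k / k.factorial)) := by
          rw [setIntegral_const, Real.volume_real_Ioc_of_le hx.1, smul_eq_mul, sub_zero]
  have hsumint : Summable fun k => ∫ t in Ioc 0 x, ‖X t * lterm X k t‖ := by
    apply Summable.of_nonneg_of_le (fun k => integral_nonneg fun t => norm_nonneg _) hbdint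
    exact ((Real.summable_pow_div_factorial (K * b)).mul_left K).mul_left x
  have hswap : ∑' k, ∫ t in Ioc 0 x, X t * lterm X k t = ∫ t in Ioc 0 x, ∑' k, X t * lterm X k t :=
    integral_tsum_of_summable_integral_norm hint hsumint
  have h0 : ES X x = lterm X 0 x + ∑' k, lterm X (k+1) x := Summable.tsum_eq_zero_add (hsum x hx)
  rw [h0]
  have hmain : ∑' k, lterm X (k+1) x = ∫ t in (0:ℝ)..x, X t * ES X t := by
    calc ∑' k, lterm X (k+1) x = ∑' k, ∫ t in Ioc 0 x, X t * lterm X k t := by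
          refine tsum_congr fun k => ?_
          rw [show lterm X (k+1) x = ∫ t in (0:ℝ)..x, X t * lterm X k t from by simp [lterm],
            intervalIntegral.integral_of_le hx.1]
      _ = ∫ t in Ioc 0 x, ∑' k, X t * lterm X k t := hswap
      _ = ∫ t in Ioc 0 x, X t * ES X t := by
          refine setIntegral_congr_fun measurableSet_Ioc fun t ht => ?_
          exact ((hmulsum t (hIocx ht)).tsum_eq)
      _ = ∫ t in (0:ℝ)..x, X t * ES X t := (intervalIntegral.integral_of_le hx.1).symm
  rw [hmain]
  have h00 : lterm X 0 x = (1 : Matrix ι ι ℝ) := by simp [lterm]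
  rw [h00]

lemma ES_hasDerivWithinAt (hb : 0 ≤ b) (hX : ContinuousOn X (Icc 0 b)) {x : ℝ}
    (hx : x ∈ Icc 0 b) :
    HasDerivWithinAt (ES X) (X x * ES X x) (Icc 0 b) x := by
  obtain ⟨M, hM⟩ := (isCompact_Icc).exists_bound_of_continuousOn hX
  have hM' : ∀ t ∈ Icc 0 b, ‖X t‖ ≤ max M 0 := fun t ht => (hM t ht).trans (le_max_left _ _)
  have hM0 : 0 ≤ max M 0 := le_max_right _ _
  have hgc : ContinuousOn (fun t => X t * ES X t) (Icc 0 b) :=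
    hX.matmul (ES_continuousOn hb hX hM0 hM')
  have hprim : HasDerivWithinAt (fun y => 1 + ∫ t in (0:ℝ)..y, X t * ES X t)
      (X x * ES X x) (Icc 0 b) x := (primitive_hasDerivWithinAt hgc hx).const_add 1
  exact hprim.congr (fun y hy => ES_integral_eq hb hX hM0 hM' hy) (ES_integral_eq hb hX hM0 hM' hx)

lemma ES_zero : ES X 0 = 1 := by
  have : ∀ k : ℕ, k ≠ 0 → lterm X k (0:ℝ) = 0 := by
    intro k hk
    cases k with
    | zero => exact absurd rfl hk
    | succ k => simp [lterm]
  rw [ES, tsum_eq_single 0 this]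
  simp [lterm]

end ESFacts


section FSFacts

variable {X : ℝ → Matrix ι ι ℝ} {b M : ℝ}

lemma rterm_continuousOn (hb : 0 ≤ b) (hX : ContinuousOn X (Icc 0 b)) (k : ℕ) :
    ContinuousOn (rterm X k) (Icc 0 b) := by
  induction k with
  | zero => exact continuousOn_const
  | succ k ih =>
    have hgc : ContinuousOn (fun t => rterm X k t * X t) (Icc 0 b) := ih.matmul hX
    have hint : IntegrableOn (fun t => rterm X k t * X t) (uIcc 0 b) := by
      rw [uIcc_of_le hb]; exact hgc.integrableOn_Icc
    have := continuousOn_primitive_interval hint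
    rw [uIcc_of_le hb] at this
    exact this.congr fun x hx => by simp [rterm]

lemma rterm_norm_le (hb : 0 ≤ b) (hX : ContinuousOn X (Icc 0 b)) (hM0 : 0 ≤ M)
    (hM : ∀ t ∈ Icc 0 b, ‖X t‖ ≤ M) (k : ℕ) :
    ∀ x ∈ Icc 0 b, ‖rterm X k x‖ ≤ (Fintype.card ι * M * x) ^ k / k.factorial := by
  induction k with
  | zero => intro x hx; simpa [rterm] using matrix_norm_one_le
  | succ k ih =>
    intro x hx
    set K : ℝ := (Fintype.card ι : ℝ) * M with hK
    have hK0 : 0 ≤ K := by positivity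
    have hsub : Icc 0 x ⊆ Icc 0 b := Icc_subset_Icc le_rfl hx.2
    have hgc : ContinuousOn (fun t => rterm X k t * X t) (Icc 0 b) :=
      (rterm_continuousOn hb hX k).matmul hX
    have h1 : rterm X (k+1) x = ∫ t in (0:ℝ)..x, rterm X k t * X t := by simp [rterm]
    rw [h1]
    calc ‖∫ t in (0:ℝ)..x, rterm X k t * X t‖
        ≤ ∫ t in (0:ℝ)..x, ‖rterm X k t * X t‖ :=
          intervalIntegral.norm_integral_le_integral_norm hx.1
      _ ≤ ∫ t in (0:ℝ)..x, K ^ (k+1) * t ^ k / k.factorial := by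
          apply intervalIntegral.integral_mono_on hx.1
          · exact intervalIntegrable_of_contOn hgc.norm hx
          · apply Continuous.intervalIntegrable; continuity
          · intro t ht
            have ht' := hsub ht
            calc ‖rterm X k t * X t‖
                ≤ Fintype.card ι * ‖rterm X k t‖ * ‖X t‖ := norm_matmul_le _ _
              _ ≤ Fintype.card ι * ((K * t) ^ k / k.factorial) * M := by
                  apply mul_le_mul
                  · exact mul_le_mul_of_nonneg_left (ih t ht') (by positivity)
                  · exact hM t ht'
                  · exact norm_nonneg _
                  · exact mul_nonneg (by positivity)
                      (div_nonneg (pow_nonneg (mul_nonneg hK0 ht'.1) _) (by positivity))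
              _ = K ^ (k+1) * t ^ k / k.factorial := by rw [hK, mul_pow]; ring
      _ = (K * x) ^ (k+1) / (k+1).factorial := by
          have h2 : (fun t : ℝ => K ^ (k+1) * t ^ k / (k.factorial : ℝ)) =
              fun t : ℝ => (K ^ (k+1) / k.factorial) * t ^ k := by funext t; ring
          rw [h2, intervalIntegral.integral_const_mul, integral_pow]
          have h3 : ((k+1).factorial : ℝ) = (k+1) * k.factorial := by
            rw [Nat.factorial_succ]; push_cast; ring
          rw [h3, mul_pow]
          have hkf : (k.factorial : ℝ) ≠ 0 := by positivity
          have hk1 : ((k:ℝ)+1) ≠ 0 := by positivity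
          field_simp
          ring

lemma rterm_norm_le' (hb : 0 ≤ b) (hX : ContinuousOn X (Icc 0 b)) (hM0 : 0 ≤ M)
    (hM : ∀ t ∈ Icc 0 b, ‖X t‖ ≤ M) (k : ℕ) :
    ∀ x ∈ Icc 0 b, ‖rterm X k x‖ ≤ (Fintype.card ι * M * b) ^ k / k.factorial := by
  intro x hx
  refine le_trans (rterm_norm_le hb hX hM0 hM k x hx) ?_
  gcongr
  · exact mul_nonneg (by positivity) hx.1
  · exact hx.2

lemma summable_rterm (hb : 0 ≤ b) (hX : ContinuousOn X (Icc 0 b)) (hM0 : 0 ≤ M)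
    (hM : ∀ t ∈ Icc 0 b, ‖X t‖ ≤ M) {x : ℝ} (hx : x ∈ Icc 0 b) :
    Summable (fun k => rterm X k x) :=
  Summable.of_norm_bounded (Real.summable_pow_div_factorial (Fintype.card ι * M * b))
    (fun k => rterm_norm_le' hb hX hM0 hM k x hx)

lemma FS_continuousOn (hb : 0 ≤ b) (hX : ContinuousOn X (Icc 0 b)) (hM0 : 0 ≤ M)
    (hM : ∀ t ∈ Icc 0 b, ‖X t‖ ≤ M) : ContinuousOn (FS X) (Icc 0 b) :=
  continuousOn_tsum (rterm_continuousOn hb hX)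
    (Real.summable_pow_div_factorial (Fintype.card ι * M * b))
    (fun k x hx => rterm_norm_le' hb hX hM0 hM k x hx)

lemma FS_integral_eq (hb : 0 ≤ b) (hX : ContinuousOn X (Icc 0 b)) (hM0 : 0 ≤ M)
    (hM : ∀ t ∈ Icc 0 b, ‖X t‖ ≤ M) {x : ℝ} (hx : x ∈ Icc 0 b) :
    FS X x = 1 + ∫ t in (0:ℝ)..x, FS X t * X t := by
  set K : ℝ := (Fintype.card ι : ℝ) * M with hK
  have hK0 : 0 ≤ K := by positivity
  have hsum : ∀ t ∈ Icc 0 b, Summable fun k => rterm X k t :=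
    fun t ht => summable_rterm hb hX hM0 hM ht
  have hgc : ∀ k, ContinuousOn (fun t => rterm X k t * X t) (Icc 0 b) :=
    fun k => (rterm_continuousOn hb hX k).matmul hX
  have hgbd : ∀ k, ∀ t ∈ Icc 0 b, ‖rterm X k t * X t‖ ≤ K * ((K * b) ^ k / k.factorial) := by
    intro k t ht
    calc ‖rterm X k t * X t‖ ≤ Fintype.card ι * ‖rterm X k t‖ * ‖X t‖ := norm_matmul_le _ _
      _ ≤ Fintype.card ι * ((K * b) ^ k / k.factorial) * M := by
          apply mul_le_mul
          · exact mul_le_mul_of_nonneg_left (rterm_norm_le' hb hX hM0 hM k t ht) (by positivity)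
          · exact hM t ht
          · exact norm_nonneg _
          · positivity
      _ = K * ((K * b) ^ k / k.factorial) := by rw [hK]; ring
  have hmulsum : ∀ t ∈ Icc 0 b, HasSum (fun k => rterm X k t * X t) (FS X t * X t) := by
    intro t ht
    have h := (hsum t ht).hasSum.map (AddMonoidHom.mulRight (X t))
      (continuous_id.mul continuous_const)
    simpa [Function.comp_def, ES, FS] using h
  have hIccx : Icc 0 x ⊆ Icc 0 b := Icc_subset_Icc le_rfl hx.2
  have hIocx : Ioc 0 x ⊆ Icc 0 b := fun t ht => hIccx (Ioc_subset_Icc_self ht)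
  have hint : ∀ k, IntegrableOn (fun t => rterm X k t * X t) (Ioc 0 x) volume :=
    fun k => (((hgc k).mono hIccx).integrableOn_Icc).mono_set Ioc_subset_Icc_self
  have hbdint : ∀ k, ∫ t in Ioc 0 x, ‖rterm X k t * X t‖ ≤ x * (K * ((K * b) ^ k / k.factorial)) := by
    intro k
    calc ∫ t in Ioc 0 x, ‖rterm X k t * X t‖
        ≤ ∫ _t in Ioc 0 x, K * ((K * b) ^ k / k.factorial) := by
          apply setIntegral_mono_on (hint k).norm
          · exact integrableOn_const measure_Ioc_lt_top.ne
          · exact measurableSet_Ioc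
          · exact fun t ht => hgbd k t (hIocx ht)
      _ = x * (K * ((K * b) ^ k / k.factorial)) := by
          rw [setIntegral_const, Real.volume_real_Ioc_of_le hx.1, smul_eq_mul, sub_zero]
  have hsumint : Summable fun k => ∫ t in Ioc 0 x, ‖rterm X k t * X t‖ := by
    apply Summable.of_nonneg_of_le (fun k => integral_nonneg fun t => norm_nonneg _) hbdint
    exact ((Real.summable_pow_div_factorial (K * b)).mul_left K).mul_left x
  have hswap : ∑' k, ∫ t in Ioc 0 x, rterm X k t * X t = ∫ t in Ioc 0 x, ∑' k, rterm X k t * X t :=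
    integral_tsum_of_summable_integral_norm hint hsumint
  have h0 : FS X x = rterm X 0 x + ∑' k, rterm X (k+1) x := Summable.tsum_eq_zero_add (hsum x hx)
  rw [h0]
  have hmain : ∑' k, rterm X (k+1) x = ∫ t in (0:ℝ)..x, FS X t * X t := by
    calc ∑' k, rterm X (k+1) x = ∑' k, ∫ t in Ioc 0 x, rterm X k t * X t := by
          refine tsum_congr fun k => ?_
          rw [show rterm X (k+1) x = ∫ t in (0:ℝ)..x, rterm X k t * X t from by simp [rterm],
            intervalIntegral.integral_of_le hx.1]
      _ = ∫ t in Ioc 0 x, ∑' k, rterm X k t * X t := hswap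
      _ = ∫ t in Ioc 0 x, FS X t * X t := by
          refine setIntegral_congr_fun measurableSet_Ioc fun t ht => ?_
          exact ((hmulsum t (hIocx ht)).tsum_eq)
      _ = ∫ t in (0:ℝ)..x, FS X t * X t := (intervalIntegral.integral_of_le hx.1).symm
  rw [hmain]
  have h00 : rterm X 0 x = (1 : Matrix ι ι ℝ) := by simp [rterm]
  rw [h00]

lemma FS_hasDerivWithinAt (hb : 0 ≤ b) (hX : ContinuousOn X (Icc 0 b)) {x : ℝ}
    (hx : x ∈ Icc 0 b) :
    HasDerivWithinAt (FS X) (FS X x * X x) (Icc 0 b) x := by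
  obtain ⟨M, hM⟩ := (isCompact_Icc).exists_bound_of_continuousOn hX
  have hM' : ∀ t ∈ Icc 0 b, ‖X t‖ ≤ max M 0 := fun t ht => (hM t ht).trans (le_max_left _ _)
  have hM0 : 0 ≤ max M 0 := le_max_right _ _
  have hgc : ContinuousOn (fun t => FS X t * X t) (Icc 0 b) :=
    (FS_continuousOn hb hX hM0 hM').matmul hX
  have hprim : HasDerivWithinAt (fun y => 1 + ∫ t in (0:ℝ)..y, FS X t * X t)
      (FS X x * X x) (Icc 0 b) x := (primitive_hasDerivWithinAt hgc hx).const_add 1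
  exact hprim.congr (fun y hy => FS_integral_eq hb hX hM0 hM' hy) (FS_integral_eq hb hX hM0 hM' hx)

lemma FS_continuousOn' (hb : 0 ≤ b) (hX : ContinuousOn X (Icc 0 b)) :
    ContinuousOn (FS X) (Icc 0 b) := by
  obtain ⟨M, hM⟩ := (isCompact_Icc).exists_bound_of_continuousOn hX
  exact FS_continuousOn hb hX (le_max_right _ _) fun t ht => (hM t ht).trans (le_max_left _ _)

lemma ES_continuousOn' (hb : 0 ≤ b) (hX : ContinuousOn X (Icc 0 b)) :
    ContinuousOn (ES X) (Icc 0 b) := by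
  obtain ⟨M, hM⟩ := (isCompact_Icc).exists_bound_of_continuousOn hX
  exact ES_continuousOn hb hX (le_max_right _ _) fun t ht => (hM t ht).trans (le_max_left _ _)

lemma FS_zero : FS X 0 = 1 := by
  have : ∀ k : ℕ, k ≠ 0 → rterm X k (0:ℝ) = 0 := by
    intro k hk
    cases k with
    | zero => exact absurd rfl hk
    | succ k => simp [rterm]
  rw [FS, tsum_eq_single 0 this]
  simp [rterm]

end FSFacts


end Helpers

/-- Riccati solution built from a particular solution `Y` with `Y 0 = 0`:
with `R = ℱ(−(B+P·Y))·P·ℰ(A−Y·P)`, the function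
`W = Y + ℰ(A−Y·P)·W₀·(1 + (∫_0^x R)·W₀)⁻¹·ℱ(−(B+P·Y))` solves the Riccati equation
with `W 0 = W₀`. -/
theorem riccati_particular_solution {n m : ℕ} (b c : ℝ)
    (A : ℝ → Matrix (Fin n) (Fin n) ℝ) (B : ℝ → Matrix (Fin m) (Fin m) ℝ)
    (P : ℝ → Matrix (Fin m) (Fin n) ℝ) (Q : ℝ → Matrix (Fin n) (Fin m) ℝ)
    (hA : ContinuousOn A (Set.Icc 0 b)) (hB : ContinuousOn B (Set.Icc 0 b))
    (hP : ContinuousOn P (Set.Icc 0 b)) (hQ : ContinuousOn Q (Set.Icc 0 b))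
    (Y Y' : ℝ → Matrix (Fin n) (Fin m) ℝ)
    (hY : ∀ x ∈ Set.Icc (0:ℝ) b, HasDerivWithinAt Y (Y' x) (Set.Icc 0 b) x)
    (hYeq : ∀ x ∈ Set.Icc (0:ℝ) b,
      Y' x + Y x * P x * Y x + Y x * B x - A x * Y x - Q x = 0)
    (hY0 : Y 0 = 0)
    (W₀ : Matrix (Fin n) (Fin m) ℝ)
    (R : ℝ → Matrix (Fin m) (Fin n) ℝ)
    (hR : ∀ x, R x = FS (fun t => -(B t + P t * Y t)) x * P x *
      ES (fun t => A t - Y t * P t) x)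
    (W : ℝ → Matrix (Fin n) (Fin m) ℝ)
    (hW : ∀ x, W x = Y x + ES (fun t => A t - Y t * P t) x * W₀ *
      (1 + (∫ t in (0:ℝ)..x, R t) * W₀)⁻¹ * FS (fun t => -(B t + P t * Y t)) x)
    (hc0 : 0 ≤ c) (hcb : c ≤ b)
    (hinv : ∀ x ∈ Set.Icc (0:ℝ) c, IsUnit (1 + (∫ t in (0:ℝ)..x, R t) * W₀)) :
    W 0 = W₀ ∧
    ∀ x ∈ Set.Icc (0:ℝ) c, ∃ D,
      HasDerivWithinAt W D (Set.Icc 0 c) x ∧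
      D + W x * P x * W x + W x * B x - A x * W x - Q x = 0 := by
  have hb0 : (0:ℝ) ≤ b := le_trans hc0 hcb
  have hsub : Set.Icc (0:ℝ) c ⊆ Set.Icc (0:ℝ) b := Set.Icc_subset_Icc le_rfl hcb
  have hYc : ContinuousOn Y (Set.Icc 0 b) := fun x hx => (hY x hx).continuousWithinAt
  have hX₁c : ContinuousOn (fun t => A t - Y t * P t) (Set.Icc 0 b) :=
    hA.sub (hYc.matmul hP)
  have hX₂c : ContinuousOn (fun t => -(B t + P t * Y t)) (Set.Icc 0 b) :=
    (hB.add (hP.matmul hYc)).neg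
  set U := ES (fun t => A t - Y t * P t) with hUdef
  set V := FS (fun t => -(B t + P t * Y t)) with hVdef
  have hUc : ContinuousOn U (Set.Icc 0 b) := ES_continuousOn' hb0 hX₁c
  have hVc : ContinuousOn V (Set.Icc 0 b) := FS_continuousOn' hb0 hX₂c
  have hUd : ∀ x ∈ Set.Icc (0:ℝ) b,
      HasDerivWithinAt U ((A x - Y x * P x) * U x) (Set.Icc 0 b) x :=
    fun x hx => ES_hasDerivWithinAt hb0 hX₁c hx
  have hVd : ∀ x ∈ Set.Icc (0:ℝ) b,
      HasDerivWithinAt V (V x * (-(B x + P x * Y x))) (Set.Icc 0 b) x :=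
    fun x hx => FS_hasDerivWithinAt hb0 hX₂c hx
  have hRc : ContinuousOn R (Set.Icc 0 b) :=
    ((hVc.matmul hP).matmul hUc).congr fun x _ => hR x
  set G := fun y : ℝ => (1 + (∫ t in (0:ℝ)..y, R t) * W₀)⁻¹ with hGdef
  have hW' : ∀ y, W y = Y y + U y * W₀ * G y * V y := fun y => hW y
  constructor
  · have hi1 : (1 : Matrix (Fin n) (Fin n) ℝ)⁻¹ = 1 := Matrix.inv_eq_left_inv (by simp)
    rw [hW 0, hY0, hUdef, hVdef, ES_zero, FS_zero, intervalIntegral.integral_same]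
    simp [hi1]
  · intro x hx
    have hxb : x ∈ Set.Icc (0:ℝ) b := hsub hx
    have hNd : HasDerivWithinAt (fun y => 1 + (∫ t in (0:ℝ)..y, R t) * W₀)
        (V x * P x * U x * W₀) (Set.Icc 0 c) x := by
      have h1 : HasDerivWithinAt (fun y => ∫ t in (0:ℝ)..y, R t) (R x) (Set.Icc 0 c) x :=
        (primitive_hasDerivWithinAt hRc hxb).mono hsub
      rw [hR x] at h1
      have h2 := h1.matmul (hasDerivWithinAt_const x _ W₀)
      simp only [Matrix.mul_zero, add_zero] at h2
      exact h2.const_add 1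
    have hGd : HasDerivWithinAt G (-(G x * (V x * P x * U x * W₀) * G x)) (Set.Icc 0 c) x :=
      hasDerivWithinAt_matrix_inv hNd hx hinv
    have hUd' : HasDerivWithinAt U ((A x - Y x * P x) * U x) (Set.Icc 0 c) x :=
      (hUd x hxb).mono hsub
    have hVd' : HasDerivWithinAt V (V x * (-(B x + P x * Y x))) (Set.Icc 0 c) x :=
      (hVd x hxb).mono hsub
    have hYd : HasDerivWithinAt Y (Y' x) (Set.Icc 0 c) x := (hY x hxb).mono hsub
    have d1 : HasDerivWithinAt (fun y => U y * W₀) ((A x - Y x * P x) * U x * W₀)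
        (Set.Icc 0 c) x := by
      simpa using hUd'.matmul (hasDerivWithinAt_const x _ W₀)
    have d2 : HasDerivWithinAt (fun y => U y * W₀ * G y)
        ((A x - Y x * P x) * U x * W₀ * G x +
          U x * W₀ * -(G x * (V x * P x * U x * W₀) * G x)) (Set.Icc 0 c) x :=
      d1.matmul hGd
    have d3 : HasDerivWithinAt (fun y => U y * W₀ * G y * V y)
        (((A x - Y x * P x) * U x * W₀ * G x +
          U x * W₀ * -(G x * (V x * P x * U x * W₀) * G x)) * V x +
          U x * W₀ * G x * (V x * (-(B x + P x * Y x)))) (Set.Icc 0 c) x :=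
      d2.matmul hVd'
    have dW : HasDerivWithinAt W
        (Y' x + (((A x - Y x * P x) * U x * W₀ * G x +
          U x * W₀ * -(G x * (V x * P x * U x * W₀) * G x)) * V x +
          U x * W₀ * G x * (V x * (-(B x + P x * Y x))))) (Set.Icc 0 c) x :=
      (hYd.add d3).congr (fun y _ => hW' y) (hW' x)
    refine ⟨_, dW, ?_⟩
    rw [hW' x]
    refine Eq.trans ?_ (hYeq x hxb)
    simp only [Matrix.mul_add, Matrix.add_mul, Matrix.mul_sub, Matrix.sub_mul,
      Matrix.neg_mul, Matrix.mul_neg, Matrix.mul_assoc, neg_neg, sub_eq_add_neg, neg_add]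
    abel
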